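/- Let G be a caterpillar with n vertices in which every spine vertex has at least one leg, and let Δ be the maximum number of legs of any spine vertex. Then there exists a labeling of G with differential value at least n/2 − Δ − 1. -/
import Mathlib


/-- A labeling of the vertices of a finite graph on `n` vertices: a one-to-one
assignment of the numbers `1, …, n` to the vertices. -/
def IsLabeling {V : Type*} [Fintype V] (c : V → ℕ) : Prop :=
  Function.Injective c ∧ ∀ v, c v ∈ Finset.Icc 1 (Fintype.card V)

/-- The differential value of the labeling `c` is at least `d`: every edge has
label difference at least `d`. -/
def DiffValAtLeast {V : Type*} (G : SimpleGraph V) (c : V → ℕ) (d : ℕ) : Prop :=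
  ∀ u v, G.Adj u v → d ≤ Nat.dist (c u) (c v)

/-- The differential chromatic number: the maximum, over all labelings, of the
minimum label difference over the edges. -/
noncomputable def diffChromNum {V : Type*} [Fintype V] (G : SimpleGraph V) : ℕ :=
  sSup {d : ℕ | ∃ c : V → ℕ, IsLabeling c ∧ DiffValAtLeast G c d}

/-- The caterpillar with spine vertices `⟨i, none⟩` for `i : Fin s` forming a path,
where spine vertex `⟨i, none⟩` is adjacent to its `ℓ i` legs `⟨i, some j⟩`. -/
def caterpillar (s : ℕ) (ℓ : Fin s → ℕ) :
    SimpleGraph (Σ i : Fin s, Option (Fin (ℓ i))) :=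
  SimpleGraph.fromRel (fun a b =>
    (a.2 = none ∧ b.2 = none ∧ (a.1 : ℕ) + 1 = (b.1 : ℕ)) ∨
    (a.1 = b.1 ∧ a.2 = none ∧ b.2 ≠ none))


namespace Stmt13

variable {s : ℕ} (ℓ : Fin s → ℕ)

/-- low spines for pivot `p` -/
def lowS (s : ℕ) (p : ℕ) : Finset (Fin s) :=
  Finset.univ.filter (fun i => ((i : ℕ) < p ∧ (p - (i : ℕ)) % 2 = 1) ∨
    (p < (i : ℕ) ∧ ((i : ℕ) - p) % 2 = 0))

/-- high spines for pivot `p` -/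
def highS (s : ℕ) (p : ℕ) : Finset (Fin s) :=
  Finset.univ.filter (fun i => ((i : ℕ) < p ∧ (p - (i : ℕ)) % 2 = 0) ∨
    (p < (i : ℕ) ∧ ((i : ℕ) - p) % 2 = 1))

lemma mem_lowS {p : ℕ} {i : Fin s} :
    i ∈ lowS s p ↔ (((i : ℕ) < p ∧ (p - (i : ℕ)) % 2 = 1) ∨
      (p < (i : ℕ) ∧ ((i : ℕ) - p) % 2 = 0)) := by
  simp [lowS]

lemma mem_highS {p : ℕ} {i : Fin s} :
    i ∈ highS s p ↔ (((i : ℕ) < p ∧ (p - (i : ℕ)) % 2 = 0) ∨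
      (p < (i : ℕ) ∧ ((i : ℕ) - p) % 2 = 1)) := by
  simp [highS]

lemma lowS_ne_pivot {p : ℕ} {i : Fin s} (h : i ∈ lowS s p) : (i : ℕ) ≠ p := by
  rw [mem_lowS] at h; omega

lemma highS_ne_pivot {p : ℕ} {i : Fin s} (h : i ∈ highS s p) : (i : ℕ) ≠ p := by
  rw [mem_highS] at h; omega

lemma low_or_high {p : ℕ} {i : Fin s} (h : (i : ℕ) ≠ p) :
    i ∈ lowS s p ∨ i ∈ highS s p := by
  rw [mem_lowS, mem_highS]; omega

lemma not_low_and_high {p : ℕ} {i : Fin s} (h : i ∈ lowS s p) : i ∉ highS s p := by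
  rw [mem_lowS] at h; rw [mem_highS]; omega

/-- order key for the low spines -/
def keyL (p : ℕ) (i : Fin s) : ℕ := if (i : ℕ) < p then p - i else p + i

/-- order key for the high spines; `p+1` comes last -/
def keyH (p : ℕ) (i : Fin s) : ℕ :=
  if (i : ℕ) < p then p - i else if (i : ℕ) = p + 1 then 2 * s + 2 * p + 5 else p + i

lemma keyL_inj {p : ℕ} {i j : Fin s} (hi : (i : ℕ) ≠ p) (hj : (j : ℕ) ≠ p)
    (h : keyL p i = keyL p j) : i = j := by
  have h1 := i.isLt; have h2 := j.isLt
  apply Fin.ext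
  unfold keyL at h; split_ifs at h <;> omega

lemma keyH_inj {p : ℕ} {i j : Fin s} (hi : (i : ℕ) ≠ p) (hj : (j : ℕ) ≠ p)
    (h : keyH p i = keyH p j) : i = j := by
  have h1 := i.isLt; have h2 := j.isLt
  apply Fin.ext
  unfold keyH at h; split_ifs at h <;> omega

variable (s) in
def sigL (p : ℕ) : ℕ := (lowS s p).card
variable (s) in
def sigH (p : ℕ) : ℕ := (highS s p).card
def tauL (p : ℕ) : ℕ := ∑ j ∈ highS s p, ℓ j
def tauH (p : ℕ) : ℕ := ∑ j ∈ lowS s p, ℓ j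
def lam (p : ℕ) : ℕ := sigL s p + tauL ℓ p

def cntL (p : ℕ) (i : Fin s) : ℕ := ((lowS s p).filter (fun j => keyL p j < keyL p i)).card
def phi (p : ℕ) (i : Fin s) : ℕ := ∑ j ∈ (lowS s p).filter (fun j => keyL p j < keyL p i), ℓ j
def cntH (p : ℕ) (i : Fin s) : ℕ := ((highS s p).filter (fun j => keyH p j < keyH p i)).card
def psi (p : ℕ) (i : Fin s) : ℕ := ∑ j ∈ (highS s p).filter (fun j => keyH p j < keyH p i), ℓ j

/-- the labeling -/
def lab (p : ℕ) : (Σ i : Fin s, Option (Fin (ℓ i))) → ℕ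
  | ⟨i, none⟩ =>
      if (i : ℕ) = p then lam ℓ p + 1
      else if i ∈ lowS s p then cntL p i + 1
      else lam ℓ p + tauH ℓ p + 2 + cntH p i
  | ⟨i, some q⟩ =>
      if (i : ℕ) = p then lam ℓ p + tauH ℓ p + sigH s p + 2 + (q : ℕ)
      else if i ∈ lowS s p then lam ℓ p + 2 + phi ℓ p i + (q : ℕ)
      else sigL s p + 1 + psi ℓ p i + (q : ℕ)

variable {s : ℕ}

/-- generic block monotonicity -/
lemma sum_block {T : Finset (Fin s)} {key w : Fin s → ℕ} {i j : Fin s}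
    (hi : i ∈ T) (hij : key i < key j) :
    (∑ k ∈ T.filter (fun k => key k < key i), w k) + w i ≤
      ∑ k ∈ T.filter (fun k => key k < key j), w k := by
  have hnotmem : i ∉ T.filter (fun k => key k < key i) := by
    simp [Finset.mem_filter]
  have hsub : insert i (T.filter (fun k => key k < key i)) ⊆
      T.filter (fun k => key k < key j) := by
    intro k hk
    rcases Finset.mem_insert.mp hk with rfl | hk
    · exact Finset.mem_filter.mpr ⟨hi, hij⟩
    · rcases Finset.mem_filter.mp hk with ⟨h1, h2⟩
      exact Finset.mem_filter.mpr ⟨h1, h2.trans hij⟩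
  calc (∑ k ∈ T.filter (fun k => key k < key i), w k) + w i
      = ∑ k ∈ insert i (T.filter (fun k => key k < key i)), w k := by
        rw [Finset.sum_insert hnotmem]; ring
    _ ≤ _ := Finset.sum_le_sum_of_subset hsub

/-- block is inside the total -/
lemma sum_block_le {T : Finset (Fin s)} {key w : Fin s → ℕ} {i : Fin s} (hi : i ∈ T) :
    (∑ k ∈ T.filter (fun k => key k < key i), w k) + w i ≤ ∑ k ∈ T, w k := by
  have hnotmem : i ∉ T.filter (fun k => key k < key i) := by simp [Finset.mem_filter]
  have hsub : insert i (T.filter (fun k => key k < key i)) ⊆ T := by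
    intro k hk
    rcases Finset.mem_insert.mp hk with rfl | hk
    · exact hi
    · exact (Finset.mem_filter.mp hk).1
  calc (∑ k ∈ T.filter (fun k => key k < key i), w k) + w i
      = ∑ k ∈ insert i (T.filter (fun k => key k < key i)), w k := by
        rw [Finset.sum_insert hnotmem]; ring
    _ ≤ _ := Finset.sum_le_sum_of_subset hsub

lemma card_le_sum {T : Finset (Fin s)} {w : Fin s → ℕ} (hw : ∀ k ∈ T, 1 ≤ w k) :
    T.card ≤ ∑ k ∈ T, w k := by
  calc T.card = ∑ _k ∈ T, 1 := by simp
    _ ≤ ∑ k ∈ T, w k := Finset.sum_le_sum hw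

/-- three-way split estimate: the sum over the whole set, plus the count below `i`,
dominates the sum below `i` plus `w i` plus the cardinality. -/
lemma three_split {T : Finset (Fin s)} {key w : Fin s → ℕ} {i : Fin s}
    (hkey : ∀ a ∈ T, ∀ b ∈ T, key a = key b → a = b)
    (hw : ∀ k ∈ T, 1 ≤ w k) (hi : i ∈ T) :
    (∑ k ∈ T.filter (fun k => key k < key i), w k) + w i + T.card ≤
      (∑ k ∈ T, w k) + ((T.filter (fun k => key k < key i)).card + 1) := by
  classical
  set A := T.filter (fun k => key k < key i) with hA
  set B := T.filter (fun k => key i < key k) with hB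
  have hiA : i ∉ A := by simp [hA, Finset.mem_filter]
  have hiB : i ∉ B := by simp [hB, Finset.mem_filter]
  have hdisj : Disjoint A B := by
    rw [Finset.disjoint_left]
    intro k hk1 hk2
    rw [hA, Finset.mem_filter] at hk1
    rw [hB, Finset.mem_filter] at hk2
    omega
  have hpart : T = insert i (A ∪ B) := by
    ext k
    constructor
    · intro hk
      rcases lt_trichotomy (key k) (key i) with h | h | h
      · exact Finset.mem_insert.mpr (Or.inr (Finset.mem_union_left _
          (Finset.mem_filter.mpr ⟨hk, h⟩)))
      · exact Finset.mem_insert.mpr (Or.inl (hkey k hk i hi h))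
      · exact Finset.mem_insert.mpr (Or.inr (Finset.mem_union_right _
          (Finset.mem_filter.mpr ⟨hk, h⟩)))
    · intro hk
      rcases Finset.mem_insert.mp hk with rfl | hk
      · exact hi
      · rcases Finset.mem_union.mp hk with h | h
        · exact (Finset.mem_filter.mp h).1
        · exact (Finset.mem_filter.mp h).1
  have hinotin : i ∉ A ∪ B := by
    simp only [Finset.mem_union]; tauto
  have hcard : T.card = A.card + B.card + 1 := by
    rw [hpart, Finset.card_insert_of_notMem hinotin, Finset.card_union_of_disjoint hdisj]
  have hsum : ∑ k ∈ T, w k = w i + ((∑ k ∈ A, w k) + (∑ k ∈ B, w k)) := by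
    conv_lhs => rw [hpart]
    rw [Finset.sum_insert hinotin, Finset.sum_union hdisj]
  have hBcard : B.card ≤ ∑ k ∈ B, w k := by
    apply card_le_sum
    intro k hk
    exact hw k (Finset.mem_filter.mp hk).1
  omega


/-- card version of block monotonicity -/
lemma card_block {T : Finset (Fin s)} {key : Fin s → ℕ} {i j : Fin s}
    (hi : i ∈ T) (hij : key i < key j) :
    (T.filter (fun k => key k < key i)).card + 1 ≤ (T.filter (fun k => key k < key j)).card := by
  have hnotmem : i ∉ T.filter (fun k => key k < key i) := by simp [Finset.mem_filter]
  have hsub : insert i (T.filter (fun k => key k < key i)) ⊆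
      T.filter (fun k => key k < key j) := by
    intro k hk
    rcases Finset.mem_insert.mp hk with rfl | hk
    · exact Finset.mem_filter.mpr ⟨hi, hij⟩
    · rcases Finset.mem_filter.mp hk with ⟨h1, h2⟩
      exact Finset.mem_filter.mpr ⟨h1, h2.trans hij⟩
  calc (T.filter (fun k => key k < key i)).card + 1
      = (insert i (T.filter (fun k => key k < key i))).card := by
        rw [Finset.card_insert_of_notMem hnotmem]
    _ ≤ _ := Finset.card_le_card hsub

lemma card_block_le {T : Finset (Fin s)} {key : Fin s → ℕ} {i : Fin s} (hi : i ∈ T) :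
    (T.filter (fun k => key k < key i)).card + 1 ≤ T.card := by
  have hnotmem : i ∉ T.filter (fun k => key k < key i) := by simp [Finset.mem_filter]
  have hsub : insert i (T.filter (fun k => key k < key i)) ⊆ T := by
    intro k hk
    rcases Finset.mem_insert.mp hk with rfl | hk
    · exact hi
    · exact (Finset.mem_filter.mp hk).1
  calc (T.filter (fun k => key k < key i)).card + 1
      = (insert i (T.filter (fun k => key k < key i))).card := by
        rw [Finset.card_insert_of_notMem hnotmem]
    _ ≤ _ := Finset.card_le_card hsub

section Bounds

variable {ℓ : Fin s → ℕ} {p : ℕ} (hℓ : ∀ i, 1 ≤ ℓ i)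

lemma cntL_lt {i : Fin s} (hi : i ∈ lowS s p) : cntL p i + 1 ≤ sigL s p :=
  card_block_le hi

lemma cntH_lt {i : Fin s} (hi : i ∈ highS s p) : cntH p i + 1 ≤ sigH s p :=
  card_block_le hi

lemma phi_le {i : Fin s} (hi : i ∈ lowS s p) : phi ℓ p i + ℓ i ≤ tauH ℓ p :=
  sum_block_le hi

lemma psi_le {i : Fin s} (hi : i ∈ highS s p) : psi ℓ p i + ℓ i ≤ tauL ℓ p :=
  sum_block_le hi

include hℓ in
lemma cntL_le_phi {i : Fin s} : cntL p i ≤ phi ℓ p i :=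
  card_le_sum (fun k _ => hℓ k)

include hℓ in
lemma sigL_le_tauH : sigL s p ≤ tauH ℓ p := card_le_sum (fun k _ => hℓ k)

include hℓ in
lemma sigH_le_tauL : sigH s p ≤ tauL ℓ p := card_le_sum (fun k _ => hℓ k)

include hℓ in
lemma high_three {i : Fin s} (hi : i ∈ highS s p) :
    psi ℓ p i + ℓ i + sigH s p ≤ tauL ℓ p + (cntH p i + 1) := by
  have := three_split (T := highS s p) (key := keyH p) (w := ℓ) (i := i)
    (fun a ha b hb hab => keyH_inj (highS_ne_pivot ha) (highS_ne_pivot hb) hab)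
    (fun k _ => hℓ k) hi
  exact this

end Bounds

section Pivot

variable {ℓ : Fin s → ℕ} {p : ℕ}

lemma univ_partition (hp : p < s) :
    (Finset.univ : Finset (Fin s)) = insert ⟨p, hp⟩ (lowS s p ∪ highS s p) := by
  ext i
  simp only [Finset.mem_univ, true_iff, Finset.mem_insert, Finset.mem_union,
    mem_lowS, mem_highS, Fin.ext_iff]
  omega

lemma pivot_notMem_union (hp : p < s) : (⟨p, hp⟩ : Fin s) ∉ lowS s p ∪ highS s p := by
  simp only [Finset.mem_union, mem_lowS, mem_highS]
  omega

lemma disj_low_high : Disjoint (lowS s p) (highS s p) := by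
  rw [Finset.disjoint_left]
  intro k hk1 hk2
  rw [mem_lowS] at hk1; rw [mem_highS] at hk2
  omega

lemma card_partition (hp : p < s) : s = sigL s p + sigH s p + 1 := by
  have h := univ_partition (p := p) hp
  have h2 : (Finset.univ : Finset (Fin s)).card =
      (insert (⟨p, hp⟩ : Fin s) (lowS s p ∪ highS s p)).card := by rw [← h]
  rw [Finset.card_univ, Fintype.card_fin, Finset.card_insert_of_notMem (pivot_notMem_union hp),
    Finset.card_union_of_disjoint disj_low_high] at h2
  unfold sigL sigH
  omega

lemma sum_partition (hp : p < s) : ∑ i, ℓ i = tauL ℓ p + tauH ℓ p + ℓ ⟨p, hp⟩ := by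
  conv_lhs => rw [univ_partition (p := p) hp]
  rw [Finset.sum_insert (pivot_notMem_union hp),
    Finset.sum_union disj_low_high]
  unfold tauL tauH
  ring

end Pivot


section Main

variable {ℓ : Fin s → ℕ} {p : ℕ}

lemma mem_high_not_low {i : Fin s} (h : i ∈ highS s p) : i ∉ lowS s p := by
  rw [mem_highS] at h; rw [mem_lowS]; omega

lemma cntL_mono {i j : Fin s} (hi : i ∈ lowS s p) (hij : keyL p i < keyL p j) :
    cntL p i + 1 ≤ cntL p j := by
  unfold cntL; exact card_block hi hij

lemma cntH_mono {i j : Fin s} (hi : i ∈ highS s p) (hij : keyH p i < keyH p j) :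
    cntH p i + 1 ≤ cntH p j := by
  unfold cntH; exact card_block hi hij

lemma phi_mono {i j : Fin s} (hi : i ∈ lowS s p) (hij : keyL p i < keyL p j) :
    phi ℓ p i + ℓ i ≤ phi ℓ p j := by
  unfold phi; exact sum_block hi hij

lemma psi_mono {i j : Fin s} (hi : i ∈ highS s p) (hij : keyH p i < keyH p j) :
    psi ℓ p i + ℓ i ≤ psi ℓ p j := by
  unfold psi; exact sum_block hi hij

lemma cntL_pm1 {i : Fin s} (hi : (i : ℕ) + 1 = p) : cntL p i = 0 := by
  unfold cntL
  rw [Finset.card_eq_zero, Finset.filter_eq_empty_iff]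
  intro k hk
  have hkp := lowS_ne_pivot hk
  have h1 := k.isLt
  unfold keyL
  split_ifs <;> omega

lemma cntH_p1 {j : Fin s} (hj : (j : ℕ) = p + 1) (hjh : j ∈ highS s p) :
    sigH s p ≤ cntH p j + 1 := by
  have hsub : (highS s p).erase j ⊆ (highS s p).filter (fun k => keyH p k < keyH p j) := by
    intro k hk
    have hk1 : k ≠ j := (Finset.mem_erase.mp hk).1
    have hk2 : k ∈ highS s p := (Finset.mem_erase.mp hk).2
    refine Finset.mem_filter.mpr ⟨hk2, ?_⟩
    have hkp := highS_ne_pivot hk2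
    have h1 := k.isLt
    have h2 := j.isLt
    have hkval : (k : ℕ) ≠ (j : ℕ) := fun hh => hk1 (Fin.ext hh)
    unfold keyH
    split_ifs <;> omega
  have h1 : ((highS s p).erase j).card ≤ cntH p j := by
    unfold cntH; exact Finset.card_le_card hsub
  rw [Finset.card_erase_of_mem hjh] at h1
  have h2 : 1 ≤ sigH s p := Finset.card_pos.mpr ⟨j, hjh⟩
  unfold sigH at *
  omega

lemma card_V : Fintype.card (Σ i : Fin s, Option (Fin (ℓ i))) = s + ∑ i, ℓ i := by
  rw [Fintype.card_sigma]
  simp only [Fintype.card_option, Fintype.card_fin]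
  rw [Finset.sum_add_distrib]
  simp [add_comm]

-- value lemmas
lemma lab_none_pivot {i : Fin s} (h : (i : ℕ) = p) :
    lab ℓ p ⟨i, none⟩ = lam ℓ p + 1 := by
  simp [lab, h]

lemma lab_none_low {i : Fin s} (h : i ∈ lowS s p) :
    lab ℓ p ⟨i, none⟩ = cntL p i + 1 := by
  simp only [lab]
  rw [if_neg (lowS_ne_pivot h), if_pos h]

lemma lab_none_high {i : Fin s} (h : i ∈ highS s p) :
    lab ℓ p ⟨i, none⟩ = lam ℓ p + tauH ℓ p + 2 + cntH p i := by
  simp only [lab]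
  rw [if_neg (highS_ne_pivot h), if_neg (mem_high_not_low h)]

lemma lab_some_pivot {i : Fin s} {q : Fin (ℓ i)} (h : (i : ℕ) = p) :
    lab ℓ p ⟨i, some q⟩ = lam ℓ p + tauH ℓ p + sigH s p + 2 + (q : ℕ) := by
  simp [lab, h]

lemma lab_some_low {i : Fin s} {q : Fin (ℓ i)} (h : i ∈ lowS s p) :
    lab ℓ p ⟨i, some q⟩ = lam ℓ p + 2 + phi ℓ p i + (q : ℕ) := by
  simp only [lab]
  rw [if_neg (lowS_ne_pivot h), if_pos h]

lemma lab_some_high {i : Fin s} {q : Fin (ℓ i)} (h : i ∈ highS s p) :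
    lab ℓ p ⟨i, some q⟩ = sigL s p + 1 + psi ℓ p i + (q : ℕ) := by
  simp only [lab]
  rw [if_neg (highS_ne_pivot h), if_neg (mem_high_not_low h)]

lemma one_le_lab (v : Σ i : Fin s, Option (Fin (ℓ i))) : 1 ≤ lab ℓ p v := by
  rcases v with ⟨i, _ | q⟩ <;> simp only [lab] <;> split_ifs <;> omega

lemma lab_le (hℓ : ∀ i, 1 ≤ ℓ i) (hp : p < s) (v : Σ i : Fin s, Option (Fin (ℓ i))) :
    lab ℓ p v ≤ s + ∑ i, ℓ i := by
  have hcard := card_partition (p := p) hp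
  have hsum := sum_partition (ℓ := ℓ) (p := p) hp
  rcases v with ⟨i, _ | q⟩
  · rcases eq_or_ne (i : ℕ) p with hip | hip
    · rw [lab_none_pivot hip]; unfold lam at *; omega
    · rcases low_or_high hip with hil | hih
      · rw [lab_none_low hil]
        have := cntL_lt (p := p) hil
        unfold lam at *; omega
      · rw [lab_none_high hih]
        have := cntH_lt (p := p) hih
        unfold lam at *; omega
  · have hq := q.isLt
    rcases eq_or_ne (i : ℕ) p with hip | hip
    · rw [lab_some_pivot hip]
      have hif : i = ⟨p, hp⟩ := Fin.ext hip
      have hle : ℓ i = ℓ ⟨p, hp⟩ := congrArg ℓ hif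
      unfold lam at *; omega
    · rcases low_or_high hip with hil | hih
      · rw [lab_some_low hil]
        have := phi_le (ℓ := ℓ) hil
        unfold lam at *; omega
      · rw [lab_some_high hih]
        have := psi_le (ℓ := ℓ) hih
        unfold lam at *; omega

theorem lab_inj (hℓ : ∀ i, 1 ≤ ℓ i) : Function.Injective (lab ℓ p) := by
  have hL2T : sigL s p ≤ tauH ℓ p := sigL_le_tauH hℓ
  have hH2T : sigH s p ≤ tauL ℓ p := sigH_le_tauL hℓ
  have key : ∀ u v : (Σ i : Fin s, Option (Fin (ℓ i))), lab ℓ p u = lab ℓ p v → u = v := by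
    rintro ⟨i, qi⟩ ⟨j, qj⟩ h
    rcases qi with _ | qi <;> rcases qj with _ | qj
    · -- none / none
      rcases eq_or_ne (i : ℕ) p with hip | hip
      · rcases eq_or_ne (j : ℕ) p with hjp | hjp
        · have : i = j := Fin.ext (by omega)
          rw [this]
        · exfalso
          rw [lab_none_pivot hip] at h
          rcases low_or_high hjp with hjl | hjh
          · rw [lab_none_low hjl] at h
            have := cntL_lt (p := p) hjl
            unfold lam at h; omega
          · rw [lab_none_high hjh] at h; omega
      · rcases low_or_high hip with hil | hih
        · rw [lab_none_low hil] at h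
          rcases eq_or_ne (j : ℕ) p with hjp | hjp
          · exfalso
            rw [lab_none_pivot hjp] at h
            have := cntL_lt (p := p) hil
            unfold lam at h; omega
          · rcases low_or_high hjp with hjl | hjh
            · rw [lab_none_low hjl] at h
              have hij : i = j := by
                rcases lt_trichotomy (keyL p i) (keyL p j) with hlt | heq | hlt
                · have := cntL_mono hil hlt; omega
                · exact keyL_inj hip hjp heq
                · have := cntL_mono hjl hlt; omega
              rw [hij]
            · exfalso
              rw [lab_none_high hjh] at h
              have := cntL_lt (p := p) hil
              unfold lam at h; omega
        · rw [lab_none_high hih] at h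
          rcases eq_or_ne (j : ℕ) p with hjp | hjp
          · exfalso; rw [lab_none_pivot hjp] at h; omega
          · rcases low_or_high hjp with hjl | hjh
            · exfalso
              rw [lab_none_low hjl] at h
              have := cntL_lt (p := p) hjl
              unfold lam at h; omega
            · rw [lab_none_high hjh] at h
              have hij : i = j := by
                rcases lt_trichotomy (keyH p i) (keyH p j) with hlt | heq | hlt
                · have := cntH_mono hih hlt; omega
                · exact keyH_inj hip hjp heq
                · have := cntH_mono hjh hlt; omega
              rw [hij]
    · -- none / some : contradiction
      exfalso
      have hq := qj.isLt
      have hq1 := hℓ j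
      rcases eq_or_ne (i : ℕ) p with hip | hip
      · rw [lab_none_pivot hip] at h
        rcases eq_or_ne (j : ℕ) p with hjp | hjp
        · rw [lab_some_pivot hjp] at h; omega
        · rcases low_or_high hjp with hjl | hjh
          · rw [lab_some_low hjl] at h; omega
          · rw [lab_some_high hjh] at h
            have := psi_le (ℓ := ℓ) hjh
            unfold lam at h; omega
      · rcases low_or_high hip with hil | hih
        · rw [lab_none_low hil] at h
          have hcl := cntL_lt (p := p) hil
          rcases eq_or_ne (j : ℕ) p with hjp | hjp
          · rw [lab_some_pivot hjp] at h; unfold lam at h; omega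
          · rcases low_or_high hjp with hjl | hjh
            · rw [lab_some_low hjl] at h; unfold lam at h; omega
            · rw [lab_some_high hjh] at h; omega
        · rw [lab_none_high hih] at h
          rcases eq_or_ne (j : ℕ) p with hjp | hjp
          · rw [lab_some_pivot hjp] at h
            have := cntH_lt (p := p) hih
            omega
          · rcases low_or_high hjp with hjl | hjh
            · rw [lab_some_low hjl] at h
              have := phi_le (ℓ := ℓ) hjl
              omega
            · rw [lab_some_high hjh] at h
              have := psi_le (ℓ := ℓ) hjh
              unfold lam at h; omega
    · -- some / none : contradiction
      exfalso
      have hq := qi.isLt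
      have hq1 := hℓ i
      rcases eq_or_ne (j : ℕ) p with hjp | hjp
      · rw [lab_none_pivot hjp] at h
        rcases eq_or_ne (i : ℕ) p with hip | hip
        · rw [lab_some_pivot hip] at h; omega
        · rcases low_or_high hip with hil | hih
          · rw [lab_some_low hil] at h; omega
          · rw [lab_some_high hih] at h
            have := psi_le (ℓ := ℓ) hih
            unfold lam at h; omega
      · rcases low_or_high hjp with hjl | hjh
        · rw [lab_none_low hjl] at h
          have hcl := cntL_lt (p := p) hjl
          rcases eq_or_ne (i : ℕ) p with hip | hip
          · rw [lab_some_pivot hip] at h; unfold lam at h; omega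
          · rcases low_or_high hip with hil | hih
            · rw [lab_some_low hil] at h; unfold lam at h; omega
            · rw [lab_some_high hih] at h; omega
        · rw [lab_none_high hjh] at h
          rcases eq_or_ne (i : ℕ) p with hip | hip
          · rw [lab_some_pivot hip] at h
            have := cntH_lt (p := p) hjh
            omega
          · rcases low_or_high hip with hil | hih
            · rw [lab_some_low hil] at h
              have := phi_le (ℓ := ℓ) hil
              omega
            · rw [lab_some_high hih] at h
              have := psi_le (ℓ := ℓ) hih
              unfold lam at h; omega
    · -- some / some
      have hqi := qi.isLt
      have hqj := qj.isLt
      rcases eq_or_ne (i : ℕ) p with hip | hip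
      · rcases eq_or_ne (j : ℕ) p with hjp | hjp
        · obtain rfl : i = j := Fin.ext (by omega)
          rw [lab_some_pivot hip, lab_some_pivot hjp] at h
          have : qi = qj := Fin.ext (by omega)
          rw [this]
        · exfalso
          rw [lab_some_pivot hip] at h
          rcases low_or_high hjp with hjl | hjh
          · rw [lab_some_low hjl] at h
            have := phi_le (ℓ := ℓ) hjl
            omega
          · rw [lab_some_high hjh] at h
            have := psi_le (ℓ := ℓ) hjh
            unfold lam at h; omega
      · rcases low_or_high hip with hil | hih
        · rw [lab_some_low hil] at h
          rcases eq_or_ne (j : ℕ) p with hjp | hjp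
          · exfalso
            rw [lab_some_pivot hjp] at h
            have := phi_le (ℓ := ℓ) hil
            omega
          · rcases low_or_high hjp with hjl | hjh
            · rw [lab_some_low hjl] at h
              have hij : i = j := by
                rcases lt_trichotomy (keyL p i) (keyL p j) with hlt | heq | hlt
                · have := phi_mono (ℓ := ℓ) hil hlt; omega
                · exact keyL_inj hip hjp heq
                · have := phi_mono (ℓ := ℓ) hjl hlt; omega
              subst hij
              have : qi = qj := Fin.ext (by omega)
              rw [this]
            · exfalso
              rw [lab_some_high hjh] at h
              have := psi_le (ℓ := ℓ) hjh
              unfold lam at h; omega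
        · rw [lab_some_high hih] at h
          have hpsi := psi_le (ℓ := ℓ) hih
          rcases eq_or_ne (j : ℕ) p with hjp | hjp
          · exfalso
            rw [lab_some_pivot hjp] at h
            unfold lam at h; omega
          · rcases low_or_high hjp with hjl | hjh
            · exfalso
              rw [lab_some_low hjl] at h
              unfold lam at h; omega
            · rw [lab_some_high hjh] at h
              have hij : i = j := by
                rcases lt_trichotomy (keyH p i) (keyH p j) with hlt | heq | hlt
                · have := psi_mono (ℓ := ℓ) hih hlt; omega
                · exact keyH_inj hip hjp heq
                · have := psi_mono (ℓ := ℓ) hjh hlt; omega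
              subst hij
              have : qi = qj := Fin.ext (by omega)
              rw [this]
  exact fun a b => key a b

theorem lab_rel (hℓ : ∀ i, 1 ≤ ℓ i) {d : ℕ}
    (hF : d ≤ sigL s p + tauL ℓ p) (hG : d ≤ sigH s p + tauH ℓ p)
    {u v : Σ i : Fin s, Option (Fin (ℓ i))}
    (h : (u.2 = none ∧ v.2 = none ∧ (u.1 : ℕ) + 1 = (v.1 : ℕ)) ∨
      (u.1 = v.1 ∧ u.2 = none ∧ v.2 ≠ none)) :
    d ≤ Nat.dist (lab ℓ p u) (lab ℓ p v) := by
  have hL2T : sigL s p ≤ tauH ℓ p := sigL_le_tauH hℓ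
  have hH2T : sigH s p ≤ tauL ℓ p := sigH_le_tauL hℓ
  obtain ⟨i, qi⟩ := u
  obtain ⟨j, qj⟩ := v
  rcases h with ⟨h1, h2, h3⟩ | ⟨h1, h2, h3⟩
  · -- spine edge
    simp only at h1 h2 h3
    subst h1; subst h2
    rcases eq_or_ne (i : ℕ) p with hip | hip
    · -- pivot to p+1
      have hjh : j ∈ highS s p := mem_highS.mpr (Or.inr ⟨by omega, by omega⟩)
      have hcnt := cntH_p1 (by omega) hjh
      rw [lab_none_pivot hip, lab_none_high hjh, Nat.dist]
      omega
    · rcases eq_or_ne (j : ℕ) p with hjp | hjp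
      · -- p-1 to pivot
        have hil : i ∈ lowS s p := mem_lowS.mpr (Or.inl ⟨by omega, by omega⟩)
        have hcnt := cntL_pm1 (p := p) (i := i) (by omega)
        rw [lab_none_low hil, lab_none_pivot hjp, hcnt, Nat.dist]
        unfold lam at *
        omega
      · rcases low_or_high hip with hil | hih
        · have hjh : j ∈ highS s p := by
            have := mem_lowS.mp hil
            exact mem_highS.mpr (by omega)
          have := cntL_lt (p := p) hil
          rw [lab_none_low hil, lab_none_high hjh, Nat.dist]
          unfold lam at *
          omega
        · have hjl : j ∈ lowS s p := by
            have := mem_highS.mp hih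
            exact mem_lowS.mpr (by omega)
          have := cntL_lt (p := p) hjl
          rw [lab_none_high hih, lab_none_low hjl, Nat.dist]
          unfold lam at *
          omega
  · -- leg edge
    simp only at h1 h2 h3
    subst h1
    subst h2
    rcases qj with _ | q
    · exact absurd rfl h3
    have hq := q.isLt
    rcases eq_or_ne (i : ℕ) p with hip | hip
    · rw [lab_none_pivot hip, lab_some_pivot hip, Nat.dist]
      omega
    · rcases low_or_high hip with hil | hih
      · have hcp := cntL_le_phi (ℓ := ℓ) (p := p) (i := i) hℓ
        rw [lab_none_low hil, lab_some_low hil, Nat.dist]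
        unfold lam at *
        omega
      · have h3s := high_three (p := p) hℓ hih
        rw [lab_none_high hih, lab_some_high hih, Nat.dist]
        unfold lam at *
        omega

end Main

section Exists

variable {ℓ : Fin s → ℕ}

/-- the low count, as a function of the pivot -/
def Fv (ℓ : Fin s → ℕ) (p : ℕ) : ℕ := sigL s p + tauL ℓ p
/-- the high count -/
def Gv (ℓ : Fin s → ℕ) (p : ℕ) : ℕ := sigH s p + tauH ℓ p

lemma FG_sum {p : ℕ} (hp : p < s) :
    Fv ℓ p + Gv ℓ p + ℓ ⟨p, hp⟩ + 1 = s + ∑ i, ℓ i := by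
  have h1 := card_partition (p := p) hp
  have h2 := sum_partition (ℓ := ℓ) (p := p) hp
  unfold Fv Gv
  omega

lemma lowS_succ {p : ℕ} (hp : p + 1 < s) :
    lowS s (p + 1) = insert ⟨p, by omega⟩ ((highS s p).erase ⟨p + 1, hp⟩) := by
  ext i
  simp only [mem_lowS, Finset.mem_insert, Finset.mem_erase, mem_highS, Fin.ext_iff, ne_eq]
  omega

lemma highS_succ {p : ℕ} (hp : p + 1 < s) : highS s (p + 1) = lowS s p := by
  ext i
  simp only [mem_lowS, mem_highS]
  omega

lemma F_succ {p : ℕ} (hp : p + 1 < s) : Fv ℓ (p + 1) = Gv ℓ p := by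
  have hmem : (⟨p + 1, hp⟩ : Fin s) ∈ highS s p := by
    rw [mem_highS]
    simp only [Fin.val_mk]
    omega
  have hnot : (⟨p, by omega⟩ : Fin s) ∉ (highS s p).erase ⟨p + 1, hp⟩ := by
    intro hmem2
    exact highS_ne_pivot (Finset.mem_erase.mp hmem2).2 rfl
  have hσ : sigL s (p + 1) = sigH s p := by
    unfold sigL sigH
    rw [lowS_succ hp, Finset.card_insert_of_notMem hnot, Finset.card_erase_of_mem hmem]
    have : 1 ≤ (highS s p).card := Finset.card_pos.mpr ⟨_, hmem⟩
    omega
  have hτ : tauL ℓ (p + 1) = tauH ℓ p := by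
    unfold tauL tauH
    rw [highS_succ hp]
  unfold Fv Gv
  rw [hσ, hτ]

-- endpoint identities
lemma highS_last_even (hs2 : s % 2 = 0) (hL : s - 1 < s) :
    highS s (s - 1) = (highS s 0).erase ⟨s - 1, hL⟩ := by
  ext i
  have := i.isLt
  simp only [mem_highS, Finset.mem_erase, ne_eq, Fin.ext_iff, Fin.val_mk]
  omega

lemma mem_highS0_last (hs2 : s % 2 = 0) (hL : s - 1 < s) :
    (⟨s - 1, hL⟩ : Fin s) ∈ highS s 0 := by
  rw [mem_highS]
  simp only [Fin.val_mk]
  omega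

lemma E1a (hs2 : s % 2 = 0) (hL : s - 1 < s) : sigH s (s - 1) + 1 = sigH s 0 := by
  unfold sigH
  rw [highS_last_even hs2 hL, Finset.card_erase_of_mem (mem_highS0_last hs2 hL)]
  have : 1 ≤ (highS s 0).card := Finset.card_pos.mpr ⟨_, mem_highS0_last hs2 hL⟩
  omega

lemma E1b (hs2 : s % 2 = 0) (hL : s - 1 < s) :
    tauL ℓ (s - 1) + ℓ ⟨s - 1, hL⟩ = tauL ℓ 0 := by
  unfold tauL
  rw [highS_last_even hs2 hL]
  exact Finset.sum_erase_add _ _ (mem_highS0_last hs2 hL)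

lemma E2univ (hs2 : s % 2 = 0) (h0 : 0 < s) (hL : s - 1 < s) :
    (Finset.univ : Finset (Fin s)) =
      insert ⟨0, h0⟩ (insert ⟨s - 1, hL⟩ (highS s 1 ∪ highS s (s - 1))) := by
  ext i
  have := i.isLt
  simp only [Finset.mem_univ, true_iff, Finset.mem_insert, Finset.mem_union,
    mem_highS, Fin.ext_iff, Fin.val_mk]
  omega

lemma E2disj (hs2 : s % 2 = 0) : Disjoint (highS s 1) (highS s (s - 1)) := by
  rw [Finset.disjoint_left]
  intro k hk1 hk2
  have := k.isLt
  rw [mem_highS] at hk1 hk2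
  omega

lemma E2notmem0 (hs2 : s % 2 = 0) (h0 : 0 < s) (hL : s - 1 < s) :
    (⟨0, h0⟩ : Fin s) ∉ insert ⟨s - 1, hL⟩ (highS s 1 ∪ highS s (s - 1)) := by
  simp only [Finset.mem_insert, Finset.mem_union, mem_highS, Fin.ext_iff, Fin.val_mk]
  omega

lemma E2notmemL (hs2 : s % 2 = 0) (h0 : 0 < s) (hL : s - 1 < s) :
    (⟨s - 1, hL⟩ : Fin s) ∉ highS s 1 ∪ highS s (s - 1) := by
  simp only [Finset.mem_union, mem_highS, Fin.ext_iff, Fin.val_mk]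
  omega

lemma E2card (hs2 : s % 2 = 0) (h0 : 0 < s) (hL : s - 1 < s) :
    s = 2 + sigH s 1 + sigH s (s - 1) := by
  have h := E2univ hs2 h0 hL
  have h2 : (Finset.univ : Finset (Fin s)).card =
      (insert ⟨0, h0⟩ (insert ⟨s - 1, hL⟩ (highS s 1 ∪ highS s (s - 1)))).card := by rw [← h]
  rw [Finset.card_univ, Fintype.card_fin,
    Finset.card_insert_of_notMem (E2notmem0 hs2 h0 hL),
    Finset.card_insert_of_notMem (E2notmemL hs2 h0 hL),
    Finset.card_union_of_disjoint (E2disj hs2)] at h2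
  unfold sigH
  omega

lemma E2sum (hs2 : s % 2 = 0) (h0 : 0 < s) (hL : s - 1 < s) :
    ∑ i, ℓ i = ℓ ⟨0, h0⟩ + ℓ ⟨s - 1, hL⟩ + tauL ℓ 1 + tauL ℓ (s - 1) := by
  conv_lhs => rw [E2univ hs2 h0 hL]
  rw [Finset.sum_insert (E2notmem0 hs2 h0 hL), Finset.sum_insert (E2notmemL hs2 h0 hL),
    Finset.sum_union (E2disj hs2)]
  unfold tauL
  ring

lemma E3univ (hs2 : s % 2 = 1) (hL : s - 1 < s) :
    (Finset.univ : Finset (Fin s)) =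
      insert ⟨s - 1, hL⟩ (highS s 0 ∪ highS s (s - 1)) := by
  ext i
  have := i.isLt
  simp only [Finset.mem_univ, true_iff, Finset.mem_insert, Finset.mem_union,
    mem_highS, Fin.ext_iff, Fin.val_mk]
  omega

lemma E3disj (hs2 : s % 2 = 1) : Disjoint (highS s 0) (highS s (s - 1)) := by
  rw [Finset.disjoint_left]
  intro k hk1 hk2
  have := k.isLt
  rw [mem_highS] at hk1 hk2
  omega

lemma E3notmem (hs2 : s % 2 = 1) (hL : s - 1 < s) :
    (⟨s - 1, hL⟩ : Fin s) ∉ highS s 0 ∪ highS s (s - 1) := by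
  simp only [Finset.mem_union, mem_highS, Fin.ext_iff, Fin.val_mk]
  omega

lemma E3card (hs2 : s % 2 = 1) (hL : s - 1 < s) :
    s = 1 + sigH s 0 + sigH s (s - 1) := by
  have h := E3univ hs2 hL
  have h2 : (Finset.univ : Finset (Fin s)).card =
      (insert ⟨s - 1, hL⟩ (highS s 0 ∪ highS s (s - 1))).card := by rw [← h]
  rw [Finset.card_univ, Fintype.card_fin,
    Finset.card_insert_of_notMem (E3notmem hs2 hL),
    Finset.card_union_of_disjoint (E3disj hs2)] at h2
  unfold sigH
  omega

lemma E3sum (hs2 : s % 2 = 1) (hL : s - 1 < s) :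
    ∑ i, ℓ i = ℓ ⟨s - 1, hL⟩ + tauL ℓ 0 + tauL ℓ (s - 1) := by
  conv_lhs => rw [E3univ hs2 hL]
  rw [Finset.sum_insert (E3notmem hs2 hL), Finset.sum_union (E3disj hs2)]
  unfold tauL
  ring

lemma highS_last_odd (hs2 : s % 2 = 1) (hs3 : 3 ≤ s) (h0 : 0 < s) (hL : s - 1 < s) :
    highS s (s - 1) = insert ⟨0, h0⟩ ((highS s 1).erase ⟨s - 1, hL⟩) := by
  ext i
  have := i.isLt
  simp only [mem_highS, Finset.mem_insert, Finset.mem_erase, ne_eq, Fin.ext_iff, Fin.val_mk]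
  omega

lemma mem_highS1_last (hs2 : s % 2 = 1) (hs3 : 3 ≤ s) (hL : s - 1 < s) :
    (⟨s - 1, hL⟩ : Fin s) ∈ highS s 1 := by
  rw [mem_highS]
  simp only [Fin.val_mk]
  omega

lemma E4notmem (hs2 : s % 2 = 1) (hs3 : 3 ≤ s) (h0 : 0 < s) (hL : s - 1 < s) :
    (⟨0, h0⟩ : Fin s) ∉ (highS s 1).erase ⟨s - 1, hL⟩ := by
  simp only [Finset.mem_erase, mem_highS, Fin.ext_iff, Fin.val_mk, ne_eq]
  omega

lemma E4card (hs2 : s % 2 = 1) (hs3 : 3 ≤ s) (h0 : 0 < s) (hL : s - 1 < s) :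
    sigH s (s - 1) = sigH s 1 := by
  unfold sigH
  rw [highS_last_odd hs2 hs3 h0 hL,
    Finset.card_insert_of_notMem (E4notmem hs2 hs3 h0 hL),
    Finset.card_erase_of_mem (mem_highS1_last hs2 hs3 hL)]
  have : 1 ≤ (highS s 1).card := Finset.card_pos.mpr ⟨_, mem_highS1_last hs2 hs3 hL⟩
  omega

lemma E4sum (hs2 : s % 2 = 1) (hs3 : 3 ≤ s) (h0 : 0 < s) (hL : s - 1 < s) :
    tauL ℓ (s - 1) + ℓ ⟨s - 1, hL⟩ = tauL ℓ 1 + ℓ ⟨0, h0⟩ := by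
  have herase : ∑ j ∈ (highS s 1).erase ⟨s - 1, hL⟩, ℓ j + ℓ ⟨s - 1, hL⟩ = tauL ℓ 1 :=
    Finset.sum_erase_add _ _ (mem_highS1_last hs2 hs3 hL)
  have : tauL ℓ (s - 1) = ℓ ⟨0, h0⟩ + ∑ j ∈ (highS s 1).erase ⟨s - 1, hL⟩, ℓ j := by
    unfold tauL
    rw [highS_last_odd hs2 hs3 h0 hL, Finset.sum_insert (E4notmem hs2 hs3 h0 hL)]
  omega

theorem exists_pivot (hℓ : ∀ i, 1 ≤ ℓ i) (hs : 1 ≤ s) {Δ d : ℕ}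
    (hΔ : ∀ i, ℓ i ≤ Δ) (hΔ1 : 1 ≤ Δ)
    (hd : 2 * d + 2 * Δ + 1 ≤ s + ∑ i, ℓ i) :
    ∃ p, p < s ∧ d ≤ Fv ℓ p ∧ d ≤ Gv ℓ p := by
  by_contra hbad
  push_neg at hbad
  have h0 : 0 < s := hs
  have hL : s - 1 < s := by omega
  -- the alternating sequence
  set u : ℕ → ℕ := fun q => if q < s then Fv ℓ q else Gv ℓ (s - 1) with hu
  have hus : u s = Gv ℓ (s - 1) := by simp [hu]
  have huq : ∀ q, q < s → u q = Fv ℓ q := by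
    intro q hq; simp [hu, hq]
  have husucc : ∀ q, q < s → u (q + 1) = Gv ℓ q := by
    intro q hq
    rcases eq_or_lt_of_le (Nat.succ_le_of_lt hq) with heq | hlt
    · have : s - 1 = q := by omega
      rw [← this] at *
      simp [hu, heq.symm ▸ (lt_irrefl s), ← heq]
    · rw [huq _ hlt, F_succ hlt]
  have hbad' : ∀ q, q < s → u q < d ∨ u (q + 1) < d := by
    intro q hq
    have := hbad q hq
    rw [huq _ hq, husucc _ hq]
    omega
  have hsum : ∀ q (hq : q < s), u q + u (q + 1) + ℓ ⟨q, hq⟩ + 1 = s + ∑ i, ℓ i := by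
    intro q hq
    rw [huq _ hq, husucc _ hq]
    exact FG_sum hq
  have step : ∀ q, q < s → (u q < d ↔ ¬ u (q + 1) < d) := by
    intro q hq
    have h1 := hbad' q hq
    have h2 := hsum q hq
    have h3 := hΔ ⟨q, hq⟩
    omega
  -- alternation by parity
  have alt : ∀ q, q ≤ s →
      (q % 2 = 0 ∧ (u q < d ↔ u 0 < d)) ∨ (q % 2 = 1 ∧ (u q < d ↔ ¬ u 0 < d)) := by
    intro q
    induction q with
    | zero => intro _; exact Or.inl ⟨rfl, Iff.rfl⟩
    | succ q ih =>
      intro hq1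
      have hq : q < s := by omega
      have hst := step q hq
      rcases ih (by omega) with ⟨hq2, hiff⟩ | ⟨hq2, hiff⟩
      · right
        refine ⟨by omega, ?_, ?_⟩
        · intro h1 h2
          exact (hst.mp (hiff.mpr h2)) h1
        · intro h1
          by_contra h2
          exact h1 (hiff.mp (hst.mpr h2))
      · left
        refine ⟨by omega, ?_, ?_⟩
        · intro h1
          by_contra h2
          exact hst.mp (hiff.mpr h2) h1
        · intro h1
          by_contra h2
          exact (hiff.mp (hst.mpr h2)) h1
  -- endgame
  rcases Nat.lt_or_ge s 2 with hs1 | hs2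
  · -- s = 1
    have hseq : s = 1 := by omega
    have hm : ∑ i, ℓ i ≤ s * Δ := by
      calc ∑ i, ℓ i ≤ ∑ _i : Fin s, Δ := Finset.sum_le_sum (fun i _ => hΔ i)
        _ = s * Δ := by simp [Finset.sum_const, Finset.card_univ, mul_comm]
    have hmul : s * Δ = Δ := by rw [hseq, one_mul]
    omega
  rcases Nat.even_or_odd s with hse | hso
  · -- s even
    have hm2 : s % 2 = 0 := Nat.even_iff.mp hse
    have h1lt : 1 < s := by omega
    rcases alt s (le_refl s) with ⟨_, hiffs⟩ | ⟨hc, _⟩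
    swap
    · omega
    rcases alt (s - 1) (by omega) with ⟨hc, _⟩ | ⟨_, hiffL⟩
    · omega
    rcases alt 1 (by omega) with ⟨hc, _⟩ | ⟨_, hiff1⟩
    · omega
    by_cases hP0 : u 0 < d
    · -- u 0 < d and u s < d
      have hPs : u s < d := hiffs.mpr hP0
      have e1 := huq 0 h0
      have e2 := hus
      have c0 := card_partition (p := 0) h0
      have cE := E1a hm2 hL
      have sL := sum_partition (ℓ := ℓ) (p := s - 1) hL
      have sE := E1b (ℓ := ℓ) hm2 hL
      unfold Fv at e1
      unfold Gv at e2
      have hΔL := hΔ ⟨s - 1, hL⟩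
      unfold sigL at *
      omega
    · have hP1 : u 1 < d := hiff1.mpr hP0
      have hPL : u (s - 1) < d := hiffL.mpr hP0
      have e1 := huq 1 h1lt
      have e2 := huq (s - 1) hL
      have c1 := card_partition (p := 1) h1lt
      have cL := card_partition (p := s - 1) hL
      have cE := E2card hm2 h0 hL
      have sE := E2sum (ℓ := ℓ) hm2 h0 hL
      unfold Fv at e1 e2
      have hΔ0 := hΔ ⟨0, h0⟩
      have hΔL := hΔ ⟨s - 1, hL⟩
      omega
  · -- s odd
    have hm2 : s % 2 = 1 := Nat.odd_iff.mp hso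
    have hs3 : 3 ≤ s := by omega
    have h1lt : 1 < s := by omega
    rcases alt s (le_refl s) with ⟨hc, _⟩ | ⟨_, hiffs⟩
    · omega
    rcases alt (s - 1) (by omega) with ⟨_, hiffL⟩ | ⟨hc, _⟩
    swap
    · omega
    rcases alt 1 (by omega) with ⟨hc, _⟩ | ⟨_, hiff1⟩
    · omega
    by_cases hP0 : u 0 < d
    · have hPL : u (s - 1) < d := hiffL.mpr hP0
      have e1 := huq 0 h0
      have e2 := huq (s - 1) hL
      have c0 := card_partition (p := 0) h0
      have cL := card_partition (p := s - 1) hL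
      have cE := E3card hm2 hL
      have sE := E3sum (ℓ := ℓ) hm2 hL
      unfold Fv at e1 e2
      have hΔL := hΔ ⟨s - 1, hL⟩
      omega
    · have hP1 : u 1 < d := hiff1.mpr hP0
      have hPs : u s < d := hiffs.mpr hP0
      have e1 := huq 1 h1lt
      have e2 := hus
      have c1 := card_partition (p := 1) h1lt
      have cE := E4card hm2 hs3 h0 hL
      have sE := E4sum (ℓ := ℓ) hm2 hs3 h0 hL
      have sL := sum_partition (ℓ := ℓ) (p := s - 1) hL
      unfold Fv at e1
      unfold Gv at e2
      have hΔ0 := hΔ ⟨0, h0⟩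
      omega

end Exists
end Stmt13


/-- Every caterpillar on `n` vertices in which each spine vertex has at least one
leg, with at most `Δ` legs per spine vertex, admits a labeling of differential
value at least `n/2 − Δ − 1`. -/
theorem stmt_13 (s : ℕ) (hs : 1 ≤ s) (ℓ : Fin s → ℕ) (hℓ : ∀ i, 1 ≤ ℓ i) :
    ∃ c : (Σ i : Fin s, Option (Fin (ℓ i))) → ℕ, IsLabeling c ∧
      ∀ u v, (caterpillar s ℓ).Adj u v →
        (Fintype.card (Σ i : Fin s, Option (Fin (ℓ i))) : ℚ) / 2 -
          ((Finset.univ.sup ℓ : ℕ) : ℚ) - 1 ≤ (Nat.dist (c u) (c v) : ℚ) := by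
  classical
  set m := ∑ i, ℓ i with hm
  set Δ := Finset.univ.sup ℓ with hΔdef
  have hΔ : ∀ i, ℓ i ≤ Δ := fun i => Finset.le_sup (Finset.mem_univ i)
  have hΔ1 : 1 ≤ Δ := le_trans (hℓ ⟨0, hs⟩) (hΔ ⟨0, hs⟩)
  set d := (s + m + 1) / 2 - (Δ + 1) with hd
  obtain ⟨p, hp, hF, hG⟩ : ∃ p, p < s ∧ d ≤ Stmt13.Fv ℓ p ∧ d ≤ Stmt13.Gv ℓ p := by
    rcases Nat.eq_zero_or_pos d with h0 | hpos
    · exact ⟨0, hs, by omega, by omega⟩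
    · exact Stmt13.exists_pivot hℓ hs hΔ hΔ1 (by omega)
  unfold Stmt13.Fv at hF
  unfold Stmt13.Gv at hG
  refine ⟨Stmt13.lab ℓ p, ⟨Stmt13.lab_inj hℓ, ?_⟩, ?_⟩
  · intro v
    rw [Finset.mem_Icc, Stmt13.card_V]
    exact ⟨Stmt13.one_le_lab v, Stmt13.lab_le hℓ hp v⟩
  · intro u v hadj
    rw [caterpillar, SimpleGraph.fromRel_adj] at hadj
    obtain ⟨hne, hrel⟩ := hadj
    have hdist : d ≤ Nat.dist (Stmt13.lab ℓ p u) (Stmt13.lab ℓ p v) := by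
      rcases hrel with h | h
      · exact Stmt13.lab_rel hℓ hF hG h
      · rw [Nat.dist_comm]
        exact Stmt13.lab_rel hℓ hF hG h
    rw [Stmt13.card_V, ← hm]
    have h2 : ((s + m : ℕ) : ℚ) ≤ ((2 * (d + Δ + 1) : ℕ) : ℚ) := Nat.cast_le.mpr (by omega)
    have hdq : ((d : ℕ) : ℚ) ≤ ((Nat.dist (Stmt13.lab ℓ p u) (Stmt13.lab ℓ p v) : ℕ) : ℚ) :=
      Nat.cast_le.mpr hdist
    push_cast at h2 hdq ⊢
    linarith
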